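/- Let ρ = diag(ρ_11,…,ρ_nn) with all ρ_{ll} > 0. For each Bohr frequency ω = ε_m − ε_n (m > n) define Π̂_ω(X) := (Γ_{+,ω}(ρ_{nn}/ρ_{mm}) − Γ_{-,ω}) E_ω† X E_ω + (Γ_{-,ω}(ρ_{mm}/ρ_{nn}) − Γ_{+,ω}) E_ω X E_ω†. Then for all n×n matrices X, Y: Σ_ω tr(ρ Π̂_ω(X) Y) = Σ_{m,n} X_{nn} Y_{mm} ( Γ_{+,ε_m−ε_n} ρ_{nn} − Γ_{-,ε_m−ε_n} ρ_{mm} + Γ_{-,ε_n−ε_m} ρ_{nn} − Γ_{+,ε_n−ε_m} ρ_{mm} ). -/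

import Mathlib

open Matrix Finset

/-- `E_ω = |ε_n⟩⟨ε_m|` for the pair `p = (n, m)` with `n < m`:
the matrix whose only nonzero entry is a `1` in position `(n, m)`. -/
noncomputable def Eof {N : ℕ} (p : Fin N × Fin N) : Matrix (Fin N) (Fin N) ℂ :=
  Matrix.single p.1 p.2 1

/-- `Π̂_ω(X) = (Γ₊(ω)(ρ_nn/ρ_mm) − Γ₋(ω)) E_ω† X E_ω + (Γ₋(ω)(ρ_mm/ρ_nn) − Γ₊(ω)) E_ω X E_ω†`
for the Bohr frequency `ω = ε_m − ε_n` of the pair `p = (n, m)`, `n < m`. -/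
noncomputable def PiHat {N : ℕ} (ε : Fin N → ℝ) (Γm Γp : ℝ → ℝ) (r : Fin N → ℝ)
    (p : Fin N × Fin N) (X : Matrix (Fin N) (Fin N) ℂ) : Matrix (Fin N) (Fin N) ℂ :=
  ((Γp (ε p.2 - ε p.1) * (r p.1 / r p.2) - Γm (ε p.2 - ε p.1) : ℝ) : ℂ) •
      ((Eof p)ᴴ * X * Eof p) +
    ((Γm (ε p.2 - ε p.1) * (r p.2 / r p.1) - Γp (ε p.2 - ε p.1) : ℝ) : ℂ) •
      (Eof p * X * (Eof p)ᴴ)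

lemma trace_aux1 {N : ℕ} (n m : Fin N) (X Y : Matrix (Fin N) (Fin N) ℂ) (d : Fin N → ℂ) :
    Matrix.trace ((Matrix.diagonal d) * ((Eof (n,m))ᴴ * X * Eof (n,m)) * Y)
      = d m * X n n * Y m m := by
  simp [Matrix.trace, Matrix.mul_apply, Eof, Matrix.single, Matrix.diagonal,
    Matrix.diag, apply_ite, ite_and, Finset.sum_ite_eq, Finset.sum_ite_eq',
    Finset.mul_sum, Finset.sum_mul]

lemma trace_aux2 {N : ℕ} (n m : Fin N) (X Y : Matrix (Fin N) (Fin N) ℂ) (d : Fin N → ℂ) :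
    Matrix.trace ((Matrix.diagonal d) * (Eof (n,m) * X * (Eof (n,m))ᴴ) * Y)
      = d n * X m m * Y n n := by
  simp [Matrix.trace, Matrix.mul_apply, Eof, Matrix.single, Matrix.diagonal,
    Matrix.diag, apply_ite, ite_and, Finset.sum_ite_eq, Finset.sum_ite_eq',
    Finset.mul_sum, Finset.sum_mul]

/-- For `ρ = diag(ρ₁₁,…)` with all `ρ_ll > 0`:
`Σ_ω tr(ρ Π̂_ω(X) Y) = Σ_{m,n} X_{nn} Y_{mm} ( Γ₊(ε_m−ε_n) ρ_nn − Γ₋(ε_m−ε_n) ρ_mm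
  + Γ₋(ε_n−ε_m) ρ_nn − Γ₊(ε_n−ε_m) ρ_mm )`. -/
theorem trace_PiHat_eq {N : ℕ} (ε : Fin N → ℝ) (hε : StrictMono ε)
    (Γm Γp : ℝ → ℝ) (hΓm : ∀ ω, 0 ≤ Γm ω) (hΓp : ∀ ω, 0 ≤ Γp ω)
    (hΓm0 : ∀ ω ≤ (0 : ℝ), Γm ω = 0) (hΓp0 : ∀ ω ≤ (0 : ℝ), Γp ω = 0)
    (r : Fin N → ℝ) (hr : ∀ l, 0 < r l) (X Y : Matrix (Fin N) (Fin N) ℂ) :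
    ∑ p ∈ Finset.univ.filter (fun p : Fin N × Fin N => p.1 < p.2),
        Matrix.trace ((Matrix.diagonal fun l => ((r l : ℝ) : ℂ)) * PiHat ε Γm Γp r p X * Y) =
      ∑ m : Fin N, ∑ k : Fin N, X k k * Y m m *
        ((Γp (ε m - ε k) * r k - Γm (ε m - ε k) * r m +
            Γm (ε k - ε m) * r k - Γp (ε k - ε m) * r m : ℝ) : ℂ) := by
  set g : Fin N × Fin N → ℂ := fun p =>
    X p.1 p.1 * Y p.2 p.2 *
      ((Γp (ε p.2 - ε p.1) * r p.1 - Γm (ε p.2 - ε p.1) * r p.2 +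
          Γm (ε p.1 - ε p.2) * r p.1 - Γp (ε p.1 - ε p.2) * r p.2 : ℝ) : ℂ) with hg
  have hRHS : (∑ m : Fin N, ∑ k : Fin N, X k k * Y m m *
        ((Γp (ε m - ε k) * r k - Γm (ε m - ε k) * r m +
            Γm (ε k - ε m) * r k - Γp (ε k - ε m) * r m : ℝ) : ℂ)) =
      ∑ p : Fin N × Fin N, g p := by
    rw [Fintype.sum_prod_type, Finset.sum_comm]
  rw [hRHS]
  have hsplit : (∑ p : Fin N × Fin N, g p) =
      (∑ p ∈ Finset.univ.filter (fun p : Fin N × Fin N => p.1 < p.2), g p) +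
      ((∑ p ∈ Finset.univ.filter (fun p : Fin N × Fin N => p.2 < p.1), g p) +
       (∑ p ∈ Finset.univ.filter (fun p : Fin N × Fin N => ¬ p.1 < p.2 ∧ ¬ p.2 < p.1), g p)) := by
    rw [← Finset.sum_filter_add_sum_filter_not Finset.univ (fun p : Fin N × Fin N => p.1 < p.2)]
    congr 1
    rw [← Finset.sum_filter_add_sum_filter_not
      (Finset.univ.filter (fun p : Fin N × Fin N => ¬ p.1 < p.2))
      (fun p : Fin N × Fin N => p.2 < p.1), Finset.filter_filter, Finset.filter_filter]
    congr 1
    apply Finset.sum_congr _ (fun _ _ => rfl)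
    ext p; simp only [Finset.mem_filter, Finset.mem_univ, true_and]
    constructor
    · rintro ⟨h1, h2⟩; exact h2
    · intro h; exact ⟨fun h' => absurd h (lt_asymm h'), h⟩
  -- diagonal sum is zero
  have hdiag : (∑ p ∈ Finset.univ.filter
      (fun p : Fin N × Fin N => ¬ p.1 < p.2 ∧ ¬ p.2 < p.1), g p) = 0 := by
    apply Finset.sum_eq_zero
    intro p hp
    simp only [Finset.mem_filter, Finset.mem_univ, true_and] at hp
    have : p.1 = p.2 := le_antisymm (not_lt.mp hp.2) (not_lt.mp hp.1)
    simp [hg, this, hΓm0 0 le_rfl, hΓp0 0 le_rfl]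
  -- reindex the > part by swap
  have hswap : (∑ p ∈ Finset.univ.filter (fun p : Fin N × Fin N => p.2 < p.1), g p) =
      ∑ p ∈ Finset.univ.filter (fun p : Fin N × Fin N => p.1 < p.2), g p.swap := by
    apply Finset.sum_nbij' (fun p => p.swap) (fun p => p.swap) <;>
      simp [Prod.swap]
  rw [hsplit, hdiag, hswap, add_zero, ← Finset.sum_add_distrib]
  apply Finset.sum_congr rfl
  intro p hp
  simp only [Finset.mem_filter, Finset.mem_univ, true_and] at hp
  obtain ⟨n, m⟩ := p
  simp only at hp
  have hω : (0:ℝ) < ε m - ε n := sub_pos.mpr (hε hp)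
  have hneg : ε n - ε m ≤ 0 := by linarith
  have hm0 : Γm (ε n - ε m) = 0 := hΓm0 _ hneg
  have hp0 : Γp (ε n - ε m) = 0 := hΓp0 _ hneg
  have hrm : (r m : ℝ) ≠ 0 := (hr m).ne'
  have hrn : (r n : ℝ) ≠ 0 := (hr n).ne'
  simp only [PiHat, Matrix.mul_add, Matrix.add_mul, Matrix.mul_smul, Matrix.smul_mul,
    Matrix.trace_add, Matrix.trace_smul, trace_aux1, trace_aux2, hg, Prod.swap,
    smul_eq_mul, hm0, hp0]
  have hrm' : ((r m : ℝ) : ℂ) ≠ 0 := by exact_mod_cast hrm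
  have hrn' : ((r n : ℝ) : ℂ) ≠ 0 := by exact_mod_cast hrn
  push_cast
  field_simp
  ring
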